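/- In a cycle C of a graph G obtained as a fundamental cycle of a BFS tree T rooted at r (i.e., C consists of a non-tree edge xy together with the paths in T from x and y to their nearest common ancestor), each BFS layer V_i = {v : dist(v,r) = i} contains at most 2 vertices of C. -/

import Mathlib

open SimpleGraph List

section Aux

variable {V : Type*} {T : SimpleGraph V}

private lemma aux_concat_isPath {u v w : V} {p : T.Walk u v} (h : T.Adj v w)
    (hp : p.IsPath) (hw : w ∉ p.support) : (p.concat h).IsPath := by
  rw [← Walk.isPath_reverse_iff, Walk.reverse_concat]
  exact hp.reverse.cons (by simpa [Walk.support_reverse] using hw)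

private lemma aux_adj_dist (hT : T.IsTree) (r : V) {u v : V} (h : T.Adj u v) :
    T.dist r u = T.dist r v + 1 ∨ T.dist r v = T.dist r u + 1 := by
  classical
  have hc := hT.isConnected
  have h1 : T.dist u v = 1 := SimpleGraph.dist_eq_one_iff_adj.mpr h
  have h2 : T.dist v u = 1 := SimpleGraph.dist_eq_one_iff_adj.mpr h.symm
  have t1 : T.dist r v ≤ T.dist r u + T.dist u v := hc.dist_triangle
  have t2 : T.dist r u ≤ T.dist r v + T.dist v u := hc.dist_triangle
  have hne : T.dist r u ≠ T.dist r v := by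
    intro heq
    obtain ⟨P, hP, hPl⟩ := hc.exists_path_of_dist r u
    have hv : v ∉ P.support := by
      intro hv
      have d1 : T.dist r v ≤ (P.takeUntil v hv).length := SimpleGraph.dist_le _
      have d2 : T.dist v u ≤ (P.dropUntil v hv).length := SimpleGraph.dist_le _
      have d3 : (P.takeUntil v hv).length + (P.dropUntil v hv).length = P.length := by
        rw [← Walk.length_append, P.take_spec hv]
      omega
    have hP' : (P.concat h).IsPath := aux_concat_isPath h hP hv
    obtain ⟨Q, hQ, hQl⟩ := hc.exists_path_of_dist r v
    have heq2 : P.concat h = Q := ((hT.existsUnique_path r v).unique hP' hQ)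
    have : (P.concat h).length = Q.length := by rw [heq2]
    rw [Walk.length_concat] at this
    omega
  omega

private lemma aux_unique_parent (hT : T.IsTree) (r : V) {u z w : V}
    (hz : T.Adj u z) (hw : T.Adj u w)
    (hdz : T.dist r z + 1 = T.dist r u) (hdw : T.dist r w + 1 = T.dist r u) : z = w := by
  classical
  have hc := hT.isConnected
  obtain ⟨P, hP, hPl⟩ := hc.exists_path_of_dist r z
  obtain ⟨Q, hQ, hQl⟩ := hc.exists_path_of_dist r w
  have hu1 : u ∉ P.support := by
    intro hm
    have d1 : T.dist r u ≤ (P.takeUntil u hm).length := SimpleGraph.dist_le _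
    have d2 := P.length_takeUntil_le hm
    omega
  have hu2 : u ∉ Q.support := by
    intro hm
    have d1 : T.dist r u ≤ (Q.takeUntil u hm).length := SimpleGraph.dist_le _
    have d2 := Q.length_takeUntil_le hm
    omega
  have hP' : (P.concat hz.symm).IsPath := aux_concat_isPath hz.symm hP hu1
  have hQ' : (Q.concat hw.symm).IsPath := aux_concat_isPath hw.symm hQ hu2
  have heq : P.concat hz.symm = Q.concat hw.symm :=
    (hT.existsUnique_path r u).unique hP' hQ'
  have hzP : z ∈ (P.concat hz.symm).support := by
    rw [Walk.support_concat]
    simp [P.end_mem_support]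
  rw [heq, Walk.support_concat] at hzP
  simp only [List.concat_eq_append, List.mem_append, List.mem_singleton] at hzP
  have hzQ : z ∈ Q.support := by
    rcases hzP with h' | h'
    · exact h'
    · subst h'; omega
  by_contra hne
  have d1 : T.dist r z ≤ (Q.takeUntil z hzQ).length := SimpleGraph.dist_le _
  have d2 : T.dist z w ≤ (Q.dropUntil z hzQ).length := SimpleGraph.dist_le _
  have d3 : (Q.takeUntil z hzQ).length + (Q.dropUntil z hzQ).length = Q.length := by
    rw [← Walk.length_append, Q.take_spec hzQ]
  have d4 : T.dist z w ≠ 0 :=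
    SimpleGraph.dist_ne_zero_iff_ne_and_reachable.mpr ⟨hne, hc.preconnected z w⟩
  omega

private lemma aux_split (hT : T.IsTree) (r : V) :
    ∀ {z y' : V} (q : T.Walk z y'), q.IsPath →
      ∃ l₁ l₂ : List ℕ, q.support.map (fun v => T.dist r v) = l₁ ++ l₂ ∧
        l₁.Chain' (· > ·) ∧ l₂.Chain' (· < ·) := by
  intro z y' q
  induction q with
  | nil =>
    intro _
    exact ⟨[], _, (List.nil_append _).symm, List.isChain_nil, List.isChain_singleton _⟩
  | @cons u v w h q ih =>
    intro hq
    obtain ⟨l₁, l₂, heq, hc1, hc2⟩ := ih hq.of_cons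
    have hfull : l₁ ++ l₂ = T.dist r v :: (q.support.tail.map (fun x => T.dist r x)) := by
      rw [← heq]
      conv_lhs => rw [q.support_eq_cons]
      simp [-Walk.cons_tail_support]
    rcases aux_adj_dist hT r h with hgt | hlt
    · -- dist r u = dist r v + 1 : prepend to decreasing part
      refine ⟨T.dist r u :: l₁, l₂, by simp [heq], ?_, hc2⟩
      cases l₁ with
      | nil => exact List.isChain_singleton _
      | cons a t =>
        simp only [List.cons_append, List.cons.injEq] at hfull
        exact List.isChain_cons_cons.mpr ⟨by omega, hc1⟩
    · -- dist r v = dist r u + 1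
      cases q with
      | nil =>
        refine ⟨[], [T.dist r u, T.dist r v], by simp, List.isChain_nil, ?_⟩
        simp only [List.Chain', List.isChain_cons_cons, List.isChain_singleton, and_true]
        omega
      | cons h' q' =>
        rename_i v₂
        have hkey : T.dist r v₂ = T.dist r v + 1 := by
          rcases aux_adj_dist hT r h' with h1 | h1
          · exfalso
            have huv : u = v₂ := aux_unique_parent hT r h.symm h' (by omega) (by omega)
            have hu : u ∉ (Walk.cons h' q').support := ((Walk.cons_isPath_iff _ _).mp hq).2
            exact hu (by rw [huv]; simp)
          · exact h1
        have hfull2 : l₁ ++ l₂ = T.dist r v :: T.dist r v₂ ::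
            (q'.support.tail.map (fun x => T.dist r x)) := by
          rw [hfull]
          congr 1
          rw [Walk.support_cons]
          simp only [List.tail_cons]
          conv_lhs => rw [q'.support_eq_cons]
          simp [-Walk.cons_tail_support]
        match l₁, hc1 with
        | [], _ =>
          simp only [List.nil_append] at hfull2
          refine ⟨[], T.dist r u :: l₂, by simpa using heq, List.isChain_nil, ?_⟩
          rw [hfull2] at hc2 ⊢
          exact List.isChain_cons_cons.mpr ⟨by omega, hc2⟩
        | [a], _ =>
          simp only [List.cons_append, List.nil_append, List.cons.injEq] at hfull2
          obtain ⟨ha, hl₂⟩ := hfull2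
          refine ⟨[], T.dist r u :: a :: l₂, by simpa using heq, List.isChain_nil, ?_⟩
          rw [hl₂] at hc2 ⊢
          exact List.isChain_cons_cons.mpr ⟨by omega, List.isChain_cons_cons.mpr ⟨by omega, hc2⟩⟩
        | a :: b :: t, hc1 =>
          exfalso
          simp only [List.cons_append, List.cons.injEq] at hfull2
          have hab := (List.isChain_cons_cons.mp hc1).1
          omega

end Aux

private lemma aux_filter_count {α : Type*} (f : α → ℕ) (i : ℕ) (l : List α) :
    (l.filter (fun v => f v = i)).length = (l.map f).count i := by
  induction l with
  | nil => simp
  | cons a t ih =>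
    by_cases h : f a = i <;>
      simp [List.filter_cons, List.count_cons, h, ih]

/-- Let `T` be a BFS spanning tree of a connected graph `G` rooted at `r`
(a spanning tree preserving all distances from `r`, so every tree path towards
the root passes through strictly decreasing BFS layers), and let `xy` be an
edge of `G` not in `T`. The fundamental cycle of `xy` consists of the edge `xy`
together with the tree path from `x` to `y`; its vertex set is the support of
that path. Then each BFS layer `V_i = {v : dist(v,r) = i}` contains at most `2`
vertices of the fundamental cycle. -/
theorem fundamental_cycle_layers {V : Type*} [Fintype V]
    (G T : SimpleGraph V) (hle : T ≤ G) (hT : T.IsTree) (r : V)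
    (hbfs : ∀ v : V, T.dist r v = G.dist r v)
    (x y : V) (hxy : G.Adj x y) (hnot : ¬ T.Adj x y)
    (p : T.Walk x y) (hp : p.IsPath) :
    ∀ i : ℕ, (p.support.filter (fun v => G.dist r v = i)).length ≤ 2 := by
  intro i
  obtain ⟨l₁, l₂, heq, h1, h2⟩ := aux_split hT r p hp
  have hmap : p.support.map (fun v => G.dist r v) = l₁ ++ l₂ := by
    rw [← heq]
    exact List.map_congr_left fun v _ => (hbfs v).symm
  rw [aux_filter_count, hmap, List.count_append]
  have n1 : l₁.Nodup :=
    List.Pairwise.imp (fun h => ne_of_gt h) (List.isChain_iff_pairwise.mp h1)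
  have n2 : l₂.Nodup :=
    List.Pairwise.imp (fun h => ne_of_lt h) (List.isChain_iff_pairwise.mp h2)
  have c1 := List.nodup_iff_count_le_one.mp n1 i
  have c2 := List.nodup_iff_count_le_one.mp n2 i
  omega
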